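/- arXiv:math/0311070 — 2 statements merged into one kernel-verified Lean document; each statement's English description precedes it below -/
import Mathlib

section
/- Let (X,q,μ) be a pq-space and f : X → ℝ a left 1-Lipschitz function. Then (μ⊗μ)({(x,y) : f(x) − f(y) ≥ ε}) ≤ α^L(ε/2) + α^R(ε/2) for every ε > 0. -/
open MeasureTheory Set Filter ENNReal

section QM
variable {X : Type*}

/-- A quasi-metric on `X`: nonnegative, separates points (both distances zero iff equal),
and satisfies the triangle inequality. -/
def IsQuasiMetric (q : X → X → ℝ) : Prop :=
  (∀ x y, 0 ≤ q x y) ∧ (∀ x y, (q x y = 0 ∧ q y x = 0) ↔ x = y) ∧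
  (∀ x y z, q x z ≤ q x y + q y z)

/-- Left ε-neighbourhood of a set: points at left distance < ε from `A`. -/
def leftNbhd (q : X → X → ℝ) (A : Set X) (ε : ℝ) : Set X := {x | ∃ a ∈ A, q a x < ε}

/-- Right ε-neighbourhood of a set. -/
def rightNbhd (q : X → X → ℝ) (A : Set X) (ε : ℝ) : Set X := {x | ∃ a ∈ A, q x a < ε}

/-- Left concentration function of a pq-space (for ε > 0). -/
noncomputable def concL [MeasurableSpace X] (q : X → X → ℝ) (μ : Measure X) (ε : ℝ) : ℝ :=
  sSup {r | ∃ A : Set X, MeasurableSet A ∧ 1/2 ≤ (μ A).toReal ∧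
    r = 1 - (μ (leftNbhd q A ε)).toReal}

/-- Right concentration function of a pq-space (for ε > 0). -/
noncomputable def concR [MeasurableSpace X] (q : X → X → ℝ) (μ : Measure X) (ε : ℝ) : ℝ :=
  sSup {r | ∃ A : Set X, MeasurableSet A ∧ 1/2 ≤ (μ A).toReal ∧
    r = 1 - (μ (rightNbhd q A ε)).toReal}

end QM

lemma exists_median_aux {X : Type*} [MeasurableSpace X] (μ : Measure X) [IsProbabilityMeasure μ]
    (f : X → ℝ) (hmeas : Measurable f) :
    ∃ m : ℝ, (1/2 : ℝ≥0∞) ≤ μ {x | f x ≤ m} ∧ (1/2 : ℝ≥0∞) ≤ μ {x | m ≤ f x} := by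
  set S : Set ℝ := {t | (1/2 : ℝ≥0∞) ≤ μ {x | f x ≤ t}} with hS
  have hup : ∀ ⦃s t : ℝ⦄, s ∈ S → s ≤ t → t ∈ S := fun s t hs hst =>
    le_trans hs (measure_mono fun x hx => le_trans hx hst)
  have hhalf : (1/2 : ℝ≥0∞) < 1 := by norm_num
  have hSne : S.Nonempty := by
    have hmono : Monotone fun n : ℕ => {x | f x ≤ (n : ℝ)} := by
      intro a b hab x hx
      have hab' : (a:ℝ) ≤ b := Nat.cast_le.2 hab
      simp only [mem_setOf_eq] at hx ⊢
      linarith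
    have hT := tendsto_measure_iUnion_atTop (μ := μ) hmono
    have hU : ⋃ n : ℕ, {x | f x ≤ (n : ℝ)} = univ := by
      ext x; simp only [mem_iUnion, mem_univ, iff_true, mem_setOf_eq]
      obtain ⟨n, hn⟩ := exists_nat_ge (f x); exact ⟨n, hn⟩
    rw [hU, measure_univ] at hT
    obtain ⟨n, hn⟩ := (hT.eventually (lt_mem_nhds hhalf)).exists
    exact ⟨n, hn.le⟩
  have hbdd : BddBelow S := by
    have hanti : Antitone fun n : ℕ => {x | f x ≤ -(n : ℝ)} := by
      intro a b hab x hx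
      have hab' : (a:ℝ) ≤ b := Nat.cast_le.2 hab
      simp only [mem_setOf_eq] at hx ⊢
      linarith
    have hT := tendsto_measure_iInter_atTop (μ := μ) (s := fun n : ℕ => {x | f x ≤ -(n:ℝ)})
      (fun n => (hmeas measurableSet_Iic).nullMeasurableSet) hanti
      ⟨0, measure_ne_top μ _⟩
    have hI : ⋂ n : ℕ, {x | f x ≤ -(n : ℝ)} = ∅ := by
      ext x; simp only [mem_iInter, mem_empty_iff_false, iff_false, mem_setOf_eq, not_forall]
      obtain ⟨n, hn⟩ := exists_nat_gt (-f x)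
      exact ⟨n, by push_neg; linarith⟩
    rw [hI, measure_empty] at hT
    obtain ⟨n, hn⟩ := (hT.eventually (gt_mem_nhds (by norm_num : (0:ℝ≥0∞) < 1/2))).exists
    refine ⟨-(n : ℝ), fun s hs => ?_⟩
    by_contra hlt
    exact absurd (hup hs (le_of_not_ge hlt)) (not_le.2 hn)
  set m := sInf S with hm
  refine ⟨m, ?_, ?_⟩
  · -- μ {f ≤ m} ≥ 1/2
    have hmem : ∀ n : ℕ, m + 1/((n:ℝ)+1) ∈ S := by
      intro n
      have hpos : (0:ℝ) < 1/((n:ℝ)+1) := by positivity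
      obtain ⟨s, hsS, hslt⟩ := exists_lt_of_csInf_lt hSne (by linarith : m < m + 1/((n:ℝ)+1))
      exact hup hsS hslt.le
    have hanti : Antitone fun n : ℕ => {x | f x ≤ m + 1/((n:ℝ)+1)} := by
      intro a b hab x hx
      have hd : (1:ℝ)/((b:ℝ)+1) ≤ 1/((a:ℝ)+1) := by
        apply one_div_le_one_div_of_le (by positivity)
        have : (a:ℝ) ≤ b := Nat.cast_le.2 hab
        linarith
      simp only [mem_setOf_eq] at hx ⊢
      linarith
    have hT := tendsto_measure_iInter_atTop (μ := μ)
      (s := fun n : ℕ => {x | f x ≤ m + 1/((n:ℝ)+1)})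
      (fun n => (hmeas measurableSet_Iic).nullMeasurableSet) hanti ⟨0, measure_ne_top μ _⟩
    have hI : ⋂ n : ℕ, {x | f x ≤ m + 1/((n:ℝ)+1)} = {x | f x ≤ m} := by
      ext x
      simp only [mem_iInter, mem_setOf_eq]
      constructor
      · intro h
        by_contra hlt
        push_neg at hlt
        obtain ⟨n, hn⟩ := exists_nat_one_div_lt (by linarith : (0:ℝ) < f x - m)
        have := h n; linarith
      · intro h n
        have : (0:ℝ) < 1/((n:ℝ)+1) := by positivity
        linarith
    rw [hI] at hT
    exact ge_of_tendsto hT (Eventually.of_forall fun n => hmem n)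
  · -- μ {m ≤ f} ≥ 1/2
    have hnot : ∀ n : ℕ, μ {x | f x ≤ m - 1/((n:ℝ)+1)} ≤ 1/2 := by
      intro n
      have hpos : (0:ℝ) < 1/((n:ℝ)+1) := by positivity
      have hns : m - 1/((n:ℝ)+1) ∉ S := fun h => absurd (csInf_le hbdd h) (by linarith)
      exact le_of_not_ge hns
    have hmono : Monotone fun n : ℕ => {x | f x ≤ m - 1/((n:ℝ)+1)} := by
      intro a b hab x hx
      have hd : (1:ℝ)/((b:ℝ)+1) ≤ 1/((a:ℝ)+1) := by
        apply one_div_le_one_div_of_le (by positivity)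
        have : (a:ℝ) ≤ b := Nat.cast_le.2 hab
        linarith
      simp only [mem_setOf_eq] at hx ⊢
      linarith
    have hT := tendsto_measure_iUnion_atTop (μ := μ) hmono
    have hU : ⋃ n : ℕ, {x | f x ≤ m - 1/((n:ℝ)+1)} = {x | f x < m} := by
      ext x
      simp only [mem_iUnion, mem_setOf_eq]
      constructor
      · rintro ⟨n, hn⟩
        have : (0:ℝ) < 1/((n:ℝ)+1) := by positivity
        linarith
      · intro h
        obtain ⟨n, hn⟩ := exists_nat_one_div_lt (by linarith : (0:ℝ) < m - f x)
        exact ⟨n, by linarith⟩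
    rw [hU] at hT
    have hlt : μ {x | f x < m} ≤ 1/2 := le_of_tendsto hT (Eventually.of_forall hnot)
    have hms : MeasurableSet {x | f x < m} := hmeas measurableSet_Iio
    have hc : μ {x | f x < m}ᶜ = 1 - μ {x | f x < m} := by
      rw [measure_compl hms (measure_ne_top μ _), measure_univ]
    have hcompl : {x | f x < m}ᶜ = {x | m ≤ f x} := by
      ext x; simp [not_lt]
    rw [← hcompl, hc]
    calc (1/2 : ℝ≥0∞) = 1 - 1/2 := by norm_num
    _ ≤ 1 - μ {x | f x < m} := tsub_le_tsub_left hlt 1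

lemma conc_bddAbove {X : Type*} [MeasurableSpace X] (μ : Measure X) (g : Set X → Set X) :
    BddAbove {r | ∃ A : Set X, MeasurableSet A ∧ 1/2 ≤ (μ A).toReal ∧
      r = 1 - (μ (g A)).toReal} := by
  refine ⟨1, fun r hr => ?_⟩
  obtain ⟨A, -, -, hr⟩ := hr
  rw [hr]
  have := ENNReal.toReal_nonneg (a := μ (g A))
  linarith

lemma measure_le_one_sub {X : Type*} [MeasurableSpace X] (μ : Measure X)
    [IsProbabilityMeasure μ] {S N : Set X} (hS : MeasurableSet S) (hdisj : Disjoint N S) :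
    (μ S).toReal ≤ 1 - (μ N).toReal := by
  have h1 : (μ (N ∪ S)).toReal = (μ N).toReal + (μ S).toReal := by
    rw [measure_union hdisj hS,
      ENNReal.toReal_add (measure_ne_top μ _) (measure_ne_top μ _)]
  have h2 : (μ (N ∪ S)).toReal ≤ 1 := by
    have := ENNReal.toReal_mono ENNReal.one_ne_top (prob_le_one (μ := μ) (s := N ∪ S))
    simpa using this
  linarith

/-- deviation between values of a left 1-Lipschitz function at two random
points is controlled by the concentration functions. -/
theorem pair_deviation {X : Type*} [MeasurableSpace X]
    (q : X → X → ℝ) (hq : IsQuasiMetric q)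
    (μ : Measure X) [IsProbabilityMeasure μ]
    (f : X → ℝ) (hmeas : Measurable f) (hf : ∀ x y, f x - f y ≤ q x y)
    (ε : ℝ) (hε : 0 < ε) :
    ((μ.prod μ) {p : X × X | ε ≤ f p.1 - f p.2}).toReal ≤
      concL q μ (ε/2) + concR q μ (ε/2) := by
  obtain ⟨m, hA, hB⟩ := exists_median_aux μ f hmeas
  set A : Set X := {x | f x ≤ m} with hAdef
  set B : Set X := {x | m ≤ f x} with hBdef
  have hAm : MeasurableSet A := hmeas measurableSet_Iic
  have hBm : MeasurableSet B := hmeas measurableSet_Ici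
  set S1 : Set X := {x | m + ε/2 ≤ f x} with hS1def
  set S2 : Set X := {x | f x ≤ m - ε/2} with hS2def
  have hS1m : MeasurableSet S1 := hmeas measurableSet_Ici
  have hS2m : MeasurableSet S2 := hmeas measurableSet_Iic
  -- the event is contained in a union of two slabs
  have hsub : {p : X × X | ε ≤ f p.1 - f p.2} ⊆ (S1 ×ˢ univ) ∪ (univ ×ˢ S2) := by
    rintro ⟨x, y⟩ hp
    simp only [mem_setOf_eq] at hp
    by_cases h : m + ε/2 ≤ f x
    · exact Or.inl ⟨h, mem_univ _⟩
    · push_neg at h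
      exact Or.inr ⟨mem_univ _, by simp only [hS2def, mem_setOf_eq]; linarith⟩
  have hprod : (μ.prod μ) {p : X × X | ε ≤ f p.1 - f p.2} ≤ μ S1 + μ S2 := by
    calc (μ.prod μ) {p : X × X | ε ≤ f p.1 - f p.2}
        ≤ (μ.prod μ) ((S1 ×ˢ univ) ∪ (univ ×ˢ S2)) := measure_mono hsub
      _ ≤ (μ.prod μ) (S1 ×ˢ univ) + (μ.prod μ) (univ ×ˢ S2) := measure_union_le _ _
      _ = μ S1 + μ S2 := by
          rw [Measure.prod_prod, Measure.prod_prod, measure_univ, mul_one, one_mul]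
  -- S1 avoids the right neighbourhood of A
  have hd1 : Disjoint (rightNbhd q A (ε/2)) S1 := by
    rw [disjoint_left]
    rintro x ⟨a, haA, hqa⟩ hx
    have h1 : f x - f a ≤ q x a := hf x a
    have h2 : f a ≤ m := haA
    have h3 : m + ε/2 ≤ f x := hx
    linarith
  -- S2 avoids the left neighbourhood of B
  have hd2 : Disjoint (leftNbhd q B (ε/2)) S2 := by
    rw [disjoint_left]
    rintro y ⟨b, hbB, hqb⟩ hy
    have h1 : f b - f y ≤ q b y := hf b y
    have h2 : m ≤ f b := hbB
    have h3 : f y ≤ m - ε/2 := hy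
    linarith
  have half1 : (1:ℝ)/2 ≤ (μ A).toReal := by
    have := ENNReal.toReal_mono (measure_ne_top μ A) hA
    simpa using this
  have half2 : (1:ℝ)/2 ≤ (μ B).toReal := by
    have := ENNReal.toReal_mono (measure_ne_top μ B) hB
    simpa using this
  have hb1 : (μ S1).toReal ≤ concR q μ (ε/2) := by
    refine le_trans (measure_le_one_sub μ hS1m hd1) ?_
    exact le_csSup (conc_bddAbove μ _) ⟨A, hAm, half1, rfl⟩
  have hb2 : (μ S2).toReal ≤ concL q μ (ε/2) := by
    refine le_trans (measure_le_one_sub μ hS2m hd2) ?_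
    exact le_csSup (conc_bddAbove μ _) ⟨B, hBm, half2, rfl⟩
  have hfin : μ S1 + μ S2 ≠ ⊤ := by finiteness
  calc ((μ.prod μ) {p : X × X | ε ≤ f p.1 - f p.2}).toReal
      ≤ (μ S1 + μ S2).toReal := ENNReal.toReal_mono hfin hprod
    _ = (μ S1).toReal + (μ S2).toReal :=
        ENNReal.toReal_add (measure_ne_top μ _) (measure_ne_top μ _)
    _ ≤ concR q μ (ε/2) + concL q μ (ε/2) := add_le_add hb1 hb2
    _ = concL q μ (ε/2) + concR q μ (ε/2) := add_comm _ _
end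

section
/- Let X = {a,b} with probability measure μ({a}) = 2/3, μ({b}) = 1/3, and quasi-metric q_n with q_n(a,b) = 1 and q_n(b,a) = 1/n for n ≥ 1. Then the right concentration functions α^R_n converge pointwise to 0 on (0,∞), while the left concentration functions α^L_n do not: α^L_n(ε) = 1/3 for all n whenever 0 < ε ≤ 1. -/
open MeasureTheory Set

lemma bool_set_cases (A : Set Bool) :
    A = ∅ ∨ A = {false} ∨ A = {true} ∨ A = Set.univ := by
  by_cases hf : false ∈ A <;> by_cases ht : true ∈ A
  · right; right; right; ext x; cases x <;> simp [hf, ht]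
  · right; left; ext x; cases x <;> simp [hf, ht]
  · right; right; left; ext x; cases x <;> simp [hf, ht]
  · left; ext x; cases x <;> simp [hf, ht]

/-- the two-point example (a = `false`, b = `true`) is a right but not a left
Lévy family: `α^R_n → 0` pointwise on `(0,∞)` while `α^L_n ε = 1/3` for `0 < ε ≤ 1`. -/
theorem two_point_right_not_left_levy
    (μ : Measure Bool) [IsProbabilityMeasure μ]
    (hμa : μ {false} = 2/3) (hμb : μ {true} = 1/3)
    (q : ℕ → Bool → Bool → ℝ)
    (hq0 : ∀ n x, q n x x = 0)
    (hqab : ∀ n, q n false true = 1)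
    (hqba : ∀ n : ℕ, 1 ≤ n → q n true false = 1 / (n : ℝ)) :
    (∀ ε : ℝ, 0 < ε →
        Filter.Tendsto (fun n => concR (q n) μ ε) Filter.atTop (nhds 0)) ∧
    (∀ n : ℕ, 1 ≤ n → ∀ ε : ℝ, 0 < ε → ε ≤ 1 → concL (q n) μ ε = 1/3) := by
  have h23 : (μ {false}).toReal = 2/3 := by
    rw [hμa, ENNReal.toReal_div]; norm_num
  have h13 : (μ {true}).toReal = 1/3 := by
    rw [hμb, ENNReal.toReal_div]; norm_num
  have huniv : (μ (Set.univ : Set Bool)).toReal = 1 := by rw [measure_univ, ENNReal.toReal_one]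
  have hempty : (μ (∅ : Set Bool)).toReal = 0 := by simp
  constructor
  · -- right Lévy family
    intro ε hε
    obtain ⟨N, hN⟩ := exists_nat_gt (1/ε)
    have hev : ∀ n : ℕ, N + 1 ≤ n → concR (q n) μ ε = 0 := by
      intro n hn
      have hn1 : 1 ≤ n := le_trans (Nat.le_add_left 1 N) hn
      have hnpos : (0:ℝ) < (n:ℝ) := by exact_mod_cast hn1
      have hlt : 1 / (n:ℝ) < ε := by
        rw [div_lt_iff₀ hnpos]
        have hNn : (1:ℝ)/ε < (n:ℝ) := by
          refine lt_of_lt_of_le hN ?_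
          exact_mod_cast le_trans (Nat.le_succ N) hn
        calc (1:ℝ) = ε * (1/ε) := by field_simp
        _ < ε * n := mul_lt_mul_of_pos_left hNn hε
      have hRuniv : ∀ A : Set Bool, false ∈ A → rightNbhd (q n) A ε = Set.univ := by
        intro A hA
        ext x
        simp only [rightNbhd, Set.mem_setOf_eq, Set.mem_univ, iff_true]
        cases x with
        | false => exact ⟨false, hA, by rw [hq0]; exact hε⟩
        | true => exact ⟨false, hA, by rw [hqba n hn1]; exact hlt⟩
      have hS : {r : ℝ | ∃ A : Set Bool, MeasurableSet A ∧ 1/2 ≤ (μ A).toReal ∧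
          r = 1 - (μ (rightNbhd (q n) A ε)).toReal} = {0} := by
        ext r
        simp only [Set.mem_setOf_eq, Set.mem_singleton_iff]
        constructor
        · rintro ⟨A, -, hμA, rfl⟩
          rcases bool_set_cases A with rfl | rfl | rfl | rfl
          · rw [hempty] at hμA; norm_num at hμA
          · rw [hRuniv {false} rfl, huniv]; ring
          · rw [h13] at hμA; norm_num at hμA
          · rw [hRuniv _ (Set.mem_univ _), huniv]; ring
        · rintro rfl
          exact ⟨Set.univ, MeasurableSet.univ, by rw [huniv]; norm_num,
            by rw [hRuniv _ (Set.mem_univ _), huniv]; ring⟩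
      rw [concR, hS, csSup_singleton]
    refine Filter.Tendsto.congr' ?_ tendsto_const_nhds
    filter_upwards [Filter.eventually_atTop.2 ⟨N + 1, fun n hn => hev n hn⟩] with n h
    exact h.symm
  · -- left concentration stays 1/3
    intro n hn ε hε hε1
    have hL1 : leftNbhd (q n) {false} ε = {false} := by
      ext x
      simp only [leftNbhd, Set.mem_setOf_eq, Set.mem_singleton_iff]
      cases x with
      | false =>
        simp only [iff_true]
        exact ⟨false, rfl, by rw [hq0]; exact hε⟩
      | true =>
        constructor
        · rintro ⟨a, rfl, hlt⟩
          rw [hqab] at hlt; linarith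
        · intro h; exact absurd h (by simp)
    have hLu : leftNbhd (q n) Set.univ ε = Set.univ := by
      ext x
      simp only [leftNbhd, Set.mem_setOf_eq, Set.mem_univ, iff_true]
      exact ⟨x, Set.mem_univ x, by rw [hq0]; exact hε⟩
    have hmem : (1:ℝ)/3 ∈ {r : ℝ | ∃ A : Set Bool, MeasurableSet A ∧ 1/2 ≤ (μ A).toReal ∧
        r = 1 - (μ (leftNbhd (q n) A ε)).toReal} := by
      exact ⟨{false}, measurableSet_singleton false, by rw [h23]; norm_num,
        by rw [hL1, h23]; norm_num⟩
    have hub : ∀ r ∈ {r : ℝ | ∃ A : Set Bool, MeasurableSet A ∧ 1/2 ≤ (μ A).toReal ∧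
        r = 1 - (μ (leftNbhd (q n) A ε)).toReal}, r ≤ 1/3 := by
      rintro r ⟨A, -, hμA, rfl⟩
      rcases bool_set_cases A with rfl | rfl | rfl | rfl
      · rw [hempty] at hμA; norm_num at hμA
      · rw [hL1, h23]; norm_num
      · rw [h13] at hμA; norm_num at hμA
      · rw [hLu, huniv]; norm_num
    exact IsGreatest.csSup_eq ⟨hmem, hub⟩
end
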